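/- Let w, s, t be nonnegative forms on a complex vector space X such that s and t are w-quasi-units (s[x] = sup_{n∈ℕ} inf_{y∈X} (w[x−y] + n·s[y]) and t[x] = sup_{n∈ℕ} inf_{y∈X} (w[x−y] + n·t[y]) for all x). Let m be a nonnegative form with m[x] = 2·inf_{y∈X} (s[x−y] + t[y]) for all x ∈ X (i.e. m = 2(s : t)). Then: (1) m is the greatest lower bound of s and t in the set of all nonnegative forms on X; (2) m is itself a w-quasi-unit; and (3) m[x] = sup_{n∈ℕ} inf_{y∈X} (t[x−y] + n·s[y]) = sup_{n∈ℕ} inf_{y∈X} (s[x−y] + n·t[y]) for all x ∈ X (i.e. m = D_s t = D_t s). -/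

import Mathlib

open scoped ComplexOrder

/-- A sesquilinear form (linear in the first, conjugate-linear in the second variable)
`t : X →ₗ[ℂ] X →ₗ⋆[ℂ] ℂ` is nonnegative if `t(x,x) ≥ 0` for all `x`. -/
def IsNNForm {X : Type*} [AddCommGroup X] [Module ℂ X]
    (t : X →ₗ[ℂ] X →ₗ⋆[ℂ] ℂ) : Prop :=
  ∀ x : X, 0 ≤ t x x

/-- The quadratic form of a form: `t[x] = t(x,x)`, viewed as a real number. -/
def FQ {X : Type*} [AddCommGroup X] [Module ℂ X]
    (t : X →ₗ[ℂ] X →ₗ⋆[ℂ] ℂ) (x : X) : ℝ :=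
  (t x x).re

/-- The order on forms: `t ≤ w` iff `t[x] ≤ w[x]` for all `x`. -/
def FLe {X : Type*} [AddCommGroup X] [Module ℂ X]
    (t w : X →ₗ[ℂ] X →ₗ⋆[ℂ] ℂ) : Prop :=
  ∀ x : X, FQ t x ≤ FQ w x

/-- `t` and `w` are singular: the only nonnegative form below both is the zero form. -/
def SingForm {X : Type*} [AddCommGroup X] [Module ℂ X]
    (t w : X →ₗ[ℂ] X →ₗ⋆[ℂ] ℂ) : Prop :=
  ∀ s : X →ₗ[ℂ] X →ₗ⋆[ℂ] ℂ, IsNNForm s → FLe s t → FLe s w → s = 0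

set_option linter.unusedSectionVars false

section AuxMeet

open Real

variable {X : Type*} [AddCommGroup X] [Module ℂ X]

/-- A nonnegative real functional whose square root satisfies the triangle inequality. -/
def TriFn (f : X → ℝ) : Prop :=
  (∀ x, 0 ≤ f x) ∧ ∀ x y : X, Real.sqrt (f (x + y)) ≤ Real.sqrt (f x) + Real.sqrt (f y)

lemma FQ_nn {a : X →ₗ[ℂ] X →ₗ⋆[ℂ] ℂ} (ha : IsNNForm a) (x : X) : 0 ≤ FQ a x := by
  have h := ha x
  rw [Complex.le_def] at h
  simpa [FQ] using h.1

lemma FQ_zero (a : X →ₗ[ℂ] X →ₗ⋆[ℂ] ℂ) : FQ a (0 : X) = 0 := by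
  simp [FQ]

lemma FQ_add (a : X →ₗ[ℂ] X →ₗ⋆[ℂ] ℂ) (x y : X) :
    FQ a (x + y) = FQ a x + ((a x y) + (a y x)).re + FQ a y := by
  simp only [FQ, map_add, LinearMap.add_apply, Complex.add_re]
  ring

lemma FQ_smul_real (a : X →ₗ[ℂ] X →ₗ⋆[ℂ] ℂ) (r : ℝ) (y : X) :
    FQ a ((r : ℂ) • y) = r ^ 2 * FQ a y := by
  simp only [FQ, map_smulₛₗ, LinearMap.smul_apply, smul_eq_mul, starRingEnd_apply]
  rw [RCLike.star_def, Complex.conj_ofReal]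
  simp [Complex.mul_re, Complex.ofReal_re, Complex.ofReal_im]
  ring
lemma FQ_expand (a : X →ₗ[ℂ] X →ₗ⋆[ℂ] ℂ) (r : ℝ) (x y : X) :
    FQ a (x + (r : ℂ) • y)
      = FQ a y * (r * r) + ((a x y) + (a y x)).re * r + FQ a x := by
  rw [FQ_add, FQ_smul_real]
  have h1 : (a x) ((r : ℂ) • y) = (r : ℂ) * a x y := by
    rw [map_smulₛₗ, starRingEnd_apply, RCLike.star_def, Complex.conj_ofReal]
    rfl
  have h2 : (a ((r : ℂ) • y)) x = (r : ℂ) * a y x := by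
    rw [map_smul]
    rfl
  rw [h1, h2]
  have : ((r : ℂ) * a x y + (r : ℂ) * a y x).re = r * ((a x y) + (a y x)).re := by
    rw [← mul_add]
    simp [Complex.mul_re]
  rw [this]
  ring

/-- Cauchy–Schwarz-type triangle inequality for nonnegative forms. -/
lemma tri_of_form {a : X →ₗ[ℂ] X →ₗ⋆[ℂ] ℂ} (ha : IsNNForm a) : TriFn (FQ a) := by
  refine ⟨FQ_nn ha, fun x y => ?_⟩
  set B : ℝ := ((a x y) + (a y x)).re with hB
  have hx := FQ_nn ha x
  have hy := FQ_nn ha y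
  have hpoly : ∀ r : ℝ, 0 ≤ FQ a y * (r * r) + B * r + FQ a x := by
    intro r
    rw [← FQ_expand]
    exact FQ_nn ha _
  have hdis := discrim_le_zero hpoly
  rw [discrim] at hdis
  have hB2 : B ^ 2 ≤ 4 * FQ a y * FQ a x := by linarith
  have hBle : B ≤ 2 * Real.sqrt (FQ a x) * Real.sqrt (FQ a y) := by
    have h1 : B ≤ |B| := le_abs_self B
    have h2 : |B| = Real.sqrt (B ^ 2) := (Real.sqrt_sq_eq_abs B).symm
    have h3 : Real.sqrt (B ^ 2) ≤ Real.sqrt (4 * FQ a y * FQ a x) :=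
      Real.sqrt_le_sqrt hB2
    have h4 : Real.sqrt (4 * FQ a y * FQ a x)
        = 2 * Real.sqrt (FQ a x) * Real.sqrt (FQ a y) := by
      rw [show (4 : ℝ) * FQ a y * FQ a x = (2*2) * (FQ a y * FQ a x) by ring]
      rw [Real.sqrt_mul (by norm_num : (0:ℝ) ≤ 2*2), Real.sqrt_mul hy,
        Real.sqrt_mul_self (by norm_num : (0:ℝ) ≤ 2)]
      ring
    calc B ≤ |B| := h1
      _ = _ := h2
      _ ≤ _ := h3
      _ = _ := h4
  have hexp : FQ a (x + y) = FQ a x + B + FQ a y := FQ_add a x y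
  have hsum : FQ a (x + y) ≤ (Real.sqrt (FQ a x) + Real.sqrt (FQ a y)) ^ 2 := by
    have e1 : Real.sqrt (FQ a x) ^ 2 = FQ a x := Real.sq_sqrt hx
    have e2 : Real.sqrt (FQ a y) ^ 2 = FQ a y := Real.sq_sqrt hy
    nlinarith [hexp, hBle]
  calc Real.sqrt (FQ a (x + y))
      ≤ Real.sqrt ((Real.sqrt (FQ a x) + Real.sqrt (FQ a y)) ^ 2) :=
        Real.sqrt_le_sqrt hsum
    _ = Real.sqrt (FQ a x) + Real.sqrt (FQ a y) :=
        Real.sqrt_sq (by positivity)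
lemma TriFn.sub {f : X → ℝ} (hf : TriFn f) (x y : X) :
    Real.sqrt (f x) ≤ Real.sqrt (f (x - y)) + Real.sqrt (f y) := by
  have := hf.2 (x - y) y
  rwa [sub_add_cancel] at this

lemma TriFn.const_mul {f : X → ℝ} (hf : TriFn f) {c : ℝ} (hc : 0 ≤ c) :
    TriFn (fun x => c * f x) := by
  refine ⟨fun x => mul_nonneg hc (hf.1 x), fun x y => ?_⟩
  simp only [Real.sqrt_mul hc]
  calc Real.sqrt c * Real.sqrt (f (x + y))
      ≤ Real.sqrt c * (Real.sqrt (f x) + Real.sqrt (f y)) :=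
        mul_le_mul_of_nonneg_left (hf.2 x y) (Real.sqrt_nonneg c)
    _ = _ := by ring

lemma bddBelow_of_nonneg {g : X → ℝ} (h : ∀ y, 0 ≤ g y) :
    BddBelow (Set.range g) := ⟨0, by rintro _ ⟨y, rfl⟩; exact h y⟩

/-- `r ≤ s`, `r ≤ t` with `√r` a seminorm implies `r ≤ 2(s:t)`. -/
lemma lemE1 {f a b : X → ℝ} (hf : TriFn f)
    (ha0 : ∀ x, 0 ≤ a x) (hb0 : ∀ x, 0 ≤ b x)
    (hfa : ∀ x, f x ≤ a x) (hfb : ∀ x, f x ≤ b x) (x : X) :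
    f x ≤ 2 * ⨅ y : X, (a (x - y) + b y) := by
  have key : ∀ y : X, f x / 2 ≤ a (x - y) + b y := by
    intro y
    have h1 : Real.sqrt (f x) ≤ Real.sqrt (a (x - y)) + Real.sqrt (b y) :=
      (hf.sub x y).trans
        (add_le_add (Real.sqrt_le_sqrt (hfa _)) (Real.sqrt_le_sqrt (hfb _)))
    have e1 : Real.sqrt (a (x - y)) ^ 2 = a (x - y) := Real.sq_sqrt (ha0 _)
    have e2 : Real.sqrt (b y) ^ 2 = b y := Real.sq_sqrt (hb0 _)
    have e3 : Real.sqrt (f x) ^ 2 = f x := Real.sq_sqrt (hf.1 _)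
    nlinarith [Real.sqrt_nonneg (f x), Real.sqrt_nonneg (a (x - y)),
      Real.sqrt_nonneg (b y), sq_nonneg (Real.sqrt (a (x - y)) - Real.sqrt (b y))]
  have h2 : f x / 2 ≤ ⨅ y : X, (a (x - y) + b y) := le_ciInf key
  linarith

lemma div_trick {fx C ν : ℝ} (hν : 0 < ν) (h : ν * fx ≤ ν * C + fx) :
    fx - fx / ν ≤ C := by
  rw [sub_le_iff_le_add, ← mul_le_mul_iff_right₀ hν]
  calc ν * fx ≤ ν * C + fx := h
    _ = ν * (C + fx / ν) := by field_simp

lemma key_ineq {ν R ρ s0 fxy : ℝ} (hν : 1 ≤ ν) (hR : 0 ≤ R) (hρ : 0 ≤ ρ)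
    (hs0 : 0 ≤ s0) (htri : R ≤ s0 + ρ) (hf : s0 ^ 2 ≤ fxy) :
    ν * R ^ 2 ≤ ν * fxy + ν ^ 2 * ρ ^ 2 + R ^ 2 := by
  rcases le_or_gt ρ R with hc | hc
  · have h1 : (R - ρ) ^ 2 ≤ s0 ^ 2 := by
      apply sq_le_sq' <;> nlinarith
    nlinarith [sq_nonneg (R - ν * ρ), mul_nonneg (by linarith : (0:ℝ) ≤ ν - 1)
      (sq_nonneg ρ)]
  · have hR2 : R ^ 2 ≤ ρ ^ 2 := by nlinarith
    have h3 : 0 ≤ ν * (ν - 1) * ρ ^ 2 :=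
      mul_nonneg (mul_nonneg (by linarith) (by linarith)) (sq_nonneg ρ)
    have h4 : 0 ≤ ν * fxy := mul_nonneg (by linarith) (le_trans (sq_nonneg s0) hf)
    nlinarith [hR2, h3, h4, sq_nonneg R]

/-- `f ≤ a`, `f ≤ b` with `√f` a seminorm implies `f x − f x / n ≤ (a : n b)[x]`. -/
lemma lemE2 {f a b : X → ℝ} (hf : TriFn f)
    (hfa : ∀ x, f x ≤ a x) (hfb : ∀ x, f x ≤ b x)
    (n : ℕ) (hn : 1 ≤ n) (x : X) :
    f x - f x / n ≤ ⨅ y : X, (a (x - y) + (n : ℝ) * b y) := by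
  have hν : (0:ℝ) < n := by exact_mod_cast hn
  apply le_ciInf
  intro y
  apply div_trick hν
  have hR := hf.1 x
  have hkey := key_ineq (ν := (n : ℝ)) (R := Real.sqrt (f x))
    (ρ := Real.sqrt (f y)) (s0 := Real.sqrt (f (x - y))) (fxy := f (x - y))
    (by exact_mod_cast hn) (Real.sqrt_nonneg _) (Real.sqrt_nonneg _)
    (Real.sqrt_nonneg _) (hf.sub x y) (le_of_eq (Real.sq_sqrt (hf.1 _)))
  rw [Real.sq_sqrt (hf.1 x), Real.sq_sqrt (hf.1 y)] at hkey
  have h1 : f (x - y) ≤ a (x - y) := hfa _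
  have h2 : f y ≤ b y := hfb _
  nlinarith [hkey]
lemma sqrt_add_le' {c d : ℝ} (hc : 0 ≤ c) (hd : 0 ≤ d) :
    Real.sqrt (c + d) ≤ Real.sqrt c + Real.sqrt d := by
  have h : c + d ≤ (Real.sqrt c + Real.sqrt d) ^ 2 := by
    nlinarith [Real.sq_sqrt hc, Real.sq_sqrt hd, Real.sqrt_nonneg c,
      Real.sqrt_nonneg d, mul_nonneg (Real.sqrt_nonneg c) (Real.sqrt_nonneg d)]
  calc Real.sqrt (c + d) ≤ Real.sqrt ((Real.sqrt c + Real.sqrt d) ^ 2) :=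
        Real.sqrt_le_sqrt h
    _ = _ := Real.sqrt_sq (by positivity)

lemma lemMink {A A' B B' : ℝ} (hA : 0 ≤ A) (hA' : 0 ≤ A') (hB : 0 ≤ B)
    (hB' : 0 ≤ B') :
    (Real.sqrt A + Real.sqrt A') ^ 2 + (Real.sqrt B + Real.sqrt B') ^ 2
      ≤ (Real.sqrt (A + B) + Real.sqrt (A' + B')) ^ 2 := by
  set u := Real.sqrt A
  set u' := Real.sqrt A'
  set v := Real.sqrt B
  set v' := Real.sqrt B'
  have eu : u ^ 2 = A := Real.sq_sqrt hA
  have eu' : u' ^ 2 = A' := Real.sq_sqrt hA'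
  have ev : v ^ 2 = B := Real.sq_sqrt hB
  have ev' : v' ^ 2 = B' := Real.sq_sqrt hB'
  have hu := Real.sqrt_nonneg A
  have hu' := Real.sqrt_nonneg A'
  have hv := Real.sqrt_nonneg B
  have hv' := Real.sqrt_nonneg B'
  have hcs : (u * u' + v * v') ^ 2 ≤ (A + B) * (A' + B') := by
    nlinarith [sq_nonneg (u * v' - v * u')]
  have hcross : u * u' + v * v' ≤ Real.sqrt (A + B) * Real.sqrt (A' + B') := by
    have h1 : u * u' + v * v' = Real.sqrt ((u * u' + v * v') ^ 2) :=
      (Real.sqrt_sq (by positivity)).symm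
    rw [h1, ← Real.sqrt_mul (by positivity : (0:ℝ) ≤ A + B)]
    exact Real.sqrt_le_sqrt hcs
  have e1 : Real.sqrt (A + B) ^ 2 = A + B := Real.sq_sqrt (by positivity)
  have e2 : Real.sqrt (A' + B') ^ 2 = A' + B' := Real.sq_sqrt (by positivity)
  nlinarith [hcross]

/-- The parallel-sum-type infimum of two `TriFn`s is a `TriFn`. -/
lemma lemC {a b : X → ℝ} (ha : TriFn a) (hb : TriFn b) :
    TriFn (fun x => ⨅ y : X, (a (x - y) + b y)) := by
  have hnn : ∀ x y : X, (0:ℝ) ≤ a (x - y) + b y :=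
    fun x y => add_nonneg (ha.1 _) (hb.1 _)
  have hbdd : ∀ x : X, BddBelow (Set.range fun y => a (x - y) + b y) :=
    fun x => bddBelow_of_nonneg (hnn x)
  have hf0 : ∀ x : X, (0:ℝ) ≤ ⨅ y : X, (a (x - y) + b y) :=
    fun x => le_ciInf (hnn x)
  refine ⟨hf0, fun x x' => ?_⟩
  apply le_of_forall_pos_le_add
  intro ε hε
  set δ : ℝ := (ε / 2) ^ 2 with hδdef
  have hδ : 0 < δ := by positivity
  have h1 : (⨅ y : X, (a (x - y) + b y)) < (⨅ y : X, (a (x - y) + b y)) + δ := by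
    linarith
  obtain ⟨y, hy⟩ := exists_lt_of_ciInf_lt h1
  have h2 : (⨅ y : X, (a (x' - y) + b y)) < (⨅ y : X, (a (x' - y) + b y)) + δ := by
    linarith
  obtain ⟨y', hy'⟩ := exists_lt_of_ciInf_lt h2
  have harg : x + x' - (y + y') = (x - y) + (x' - y') := by abel
  have step1 : (⨅ z : X, (a (x + x' - z) + b z))
      ≤ a ((x - y) + (x' - y')) + b (y + y') := by
    have := ciInf_le (hbdd (x + x')) (y + y')
    rwa [harg] at this
  have step2 : a ((x - y) + (x' - y'))
      ≤ (Real.sqrt (a (x - y)) + Real.sqrt (a (x' - y'))) ^ 2 := by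
    have htri := ha.2 (x - y) (x' - y')
    have := pow_le_pow_left₀ (Real.sqrt_nonneg _) htri 2
    rwa [Real.sq_sqrt (ha.1 _)] at this
  have step3 : b (y + y') ≤ (Real.sqrt (b y) + Real.sqrt (b y')) ^ 2 := by
    have htri := hb.2 y y'
    have := pow_le_pow_left₀ (Real.sqrt_nonneg _) htri 2
    rwa [Real.sq_sqrt (hb.1 _)] at this
  have step4 := lemMink (ha.1 (x - y)) (ha.1 (x' - y')) (hb.1 y) (hb.1 y')
  have step5 : (⨅ z : X, (a (x + x' - z) + b z))
      ≤ (Real.sqrt (a (x - y) + b y) + Real.sqrt (a (x' - y') + b y')) ^ 2 := by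
    linarith
  have step6 : Real.sqrt (⨅ z : X, (a (x + x' - z) + b z))
      ≤ Real.sqrt (a (x - y) + b y) + Real.sqrt (a (x' - y') + b y') := by
    calc Real.sqrt (⨅ z : X, (a (x + x' - z) + b z))
        ≤ Real.sqrt ((Real.sqrt (a (x - y) + b y)
            + Real.sqrt (a (x' - y') + b y')) ^ 2) := Real.sqrt_le_sqrt step5
      _ = _ := Real.sqrt_sq (by positivity)
  have step7 : Real.sqrt (a (x - y) + b y)
      ≤ Real.sqrt ((⨅ y : X, (a (x - y) + b y)) + δ) :=
    Real.sqrt_le_sqrt (le_of_lt hy)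
  have step8 : Real.sqrt (a (x' - y') + b y')
      ≤ Real.sqrt ((⨅ y : X, (a (x' - y) + b y)) + δ) :=
    Real.sqrt_le_sqrt (le_of_lt hy')
  have step9 : Real.sqrt ((⨅ y : X, (a (x - y) + b y)) + δ)
      ≤ Real.sqrt (⨅ y : X, (a (x - y) + b y)) + ε / 2 := by
    have := sqrt_add_le' (hf0 x) (le_of_lt hδ)
    rwa [hδdef, Real.sqrt_sq (by positivity)] at this
  have step10 : Real.sqrt ((⨅ y : X, (a (x' - y) + b y)) + δ)
      ≤ Real.sqrt (⨅ y : X, (a (x' - y) + b y)) + ε / 2 := by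
    have := sqrt_add_le' (hf0 x') (le_of_lt hδ)
    rwa [hδdef, Real.sqrt_sq (by positivity)] at this
  calc Real.sqrt (⨅ z : X, (a (x + x' - z) + b z))
      ≤ Real.sqrt (a (x - y) + b y) + Real.sqrt (a (x' - y') + b y') := step6
    _ ≤ Real.sqrt ((⨅ y : X, (a (x - y) + b y)) + δ)
        + Real.sqrt ((⨅ y : X, (a (x' - y) + b y)) + δ) := add_le_add step7 step8
    _ ≤ (Real.sqrt (⨅ y : X, (a (x - y) + b y)) + ε / 2)
        + (Real.sqrt (⨅ y : X, (a (x' - y) + b y)) + ε / 2) :=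
          add_le_add step9 step10
    _ = Real.sqrt (⨅ y : X, (a (x - y) + b y))
        + Real.sqrt (⨅ y : X, (a (x' - y) + b y)) + ε := by ring
section Forms

variable {w s t u : X →ₗ[ℂ] X →ₗ⋆[ℂ] ℂ}

/-- Consequences of the quasi-unit property: `(w : n u) ≤ u` and `u ≤ w`. -/
lemma qu_bounds (hw : IsNNForm w) (hu : IsNNForm u)
    (huq : ∀ x : X, FQ u x = ⨆ n : ℕ, ⨅ y : X, (FQ w (x - y) + (n : ℝ) * FQ u y)) :
    (∀ (n : ℕ) (x : X), (⨅ y : X, (FQ w (x - y) + (n : ℝ) * FQ u y)) ≤ FQ u x)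
      ∧ ∀ x : X, FQ u x ≤ FQ w x := by
  have hnn : ∀ (n : ℕ) (x y : X), (0:ℝ) ≤ FQ w (x - y) + (n : ℝ) * FQ u y :=
    fun n x y => add_nonneg (FQ_nn hw _) (mul_nonneg (Nat.cast_nonneg n) (FQ_nn hu _))
  have hval : ∀ (n : ℕ) (x : X),
      (⨅ y : X, (FQ w (x - y) + (n : ℝ) * FQ u y)) ≤ FQ w x := by
    intro n x
    have := ciInf_le (bddBelow_of_nonneg (hnn n x)) (0 : X)
    simpa [FQ_zero] using this
  have hbdd : ∀ x : X, BddAbove (Set.range fun n : ℕ =>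
      ⨅ y : X, (FQ w (x - y) + (n : ℝ) * FQ u y)) := by
    intro x
    exact ⟨FQ w x, by rintro _ ⟨n, rfl⟩; exact hval n x⟩
  constructor
  · intro n x
    rw [huq x]
    exact le_ciSup (hbdd x) n
  · intro x
    rw [huq x]
    exact ciSup_le fun n => hval n x

/-- The key constructive estimate: `(s : t) ≤ t/2` for quasi-units. -/
lemma parallel_le_half (hw : IsNNForm w) (hs : IsNNForm s) (ht : IsNNForm t)
    (hsw : ∀ x : X, FQ s x ≤ FQ w x)
    (htb : ∀ (n : ℕ) (x : X),
      (⨅ y : X, (FQ w (x - y) + (n : ℝ) * FQ t y)) ≤ FQ t x) (x : X) :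
    (⨅ y : X, (FQ s (x - y) + FQ t y)) ≤ FQ t x / 2 := by
  apply le_of_forall_pos_le_add
  intro ε hε
  set A : ℝ := FQ t x with hAdef
  have hA : 0 ≤ A := FQ_nn ht x
  set K : ℝ := A + ε with hKdef
  have hK : 0 < K := by positivity
  obtain ⟨n, hn⟩ := exists_nat_ge ((K / ε) ^ 2)
  have hn0 : (0:ℝ) < n := lt_of_lt_of_le (by positivity) hn
  have hsn : (0:ℝ) < Real.sqrt n := Real.sqrt_pos.mpr hn0
  have hsq : K / ε ≤ Real.sqrt n := (Real.le_sqrt (by positivity) (by positivity)).mpr hn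
  have hKe : K ≤ ε * Real.sqrt n := by
    have := (div_le_iff₀ hε).mp hsq
    linarith
  have hKdivsn : K / Real.sqrt n ≤ ε := by
    rw [div_le_iff₀ hsn]
    nlinarith
  have h1n : (1:ℝ) ≤ Real.sqrt n := by
    have h01 : (1:ℝ) ≤ (K / ε)^2 ∨ (K/ε)^2 ≤ 1 := le_total _ _
    rcases le_or_gt 1 ((n:ℝ)) with h | h
    · calc (1:ℝ) = Real.sqrt 1 := by simp
        _ ≤ Real.sqrt n := Real.sqrt_le_sqrt h
    · exfalso
      have : n = 0 := by exact_mod_cast (by omega : n < 1 → n = 0) (by exact_mod_cast h)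
      simp [this] at hn0
  have hsn_le_n : Real.sqrt n ≤ (n:ℝ) := by
    nlinarith [Real.sq_sqrt (le_of_lt hn0)]
  -- extract ξ
  have hlt : (⨅ y : X, (FQ w (x - y) + (n : ℝ) * FQ t y)) < K :=
    lt_of_le_of_lt (htb n x) (by rw [hKdef]; linarith)
  obtain ⟨ξ, hξ⟩ := exists_lt_of_ciInf_lt hlt
  have hw1 : FQ w (x - ξ) ≤ K := by
    nlinarith [mul_nonneg (Nat.cast_nonneg (α := ℝ) n) (FQ_nn ht ξ)]
  have ht1 : FQ t ξ ≤ K / n := by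
    rw [le_div_iff₀ hn0]
    nlinarith [FQ_nn hw (x - ξ)]
  -- the candidate decomposition point
  set z : X := ((2⁻¹ : ℝ) : ℂ) • (x + ξ) with hzdef
  have hxz : x - z = ((2⁻¹ : ℝ) : ℂ) • (x - ξ) := by
    rw [hzdef]
    module
  have e1 : FQ w (x - z) = 4⁻¹ * FQ w (x - ξ) := by
    rw [hxz, FQ_smul_real]; norm_num
  have e2 : FQ t z = 4⁻¹ * FQ t (x + ξ) := by
    rw [hzdef, FQ_smul_real]; norm_num
  have htri : Real.sqrt (FQ t (x + ξ)) ≤ Real.sqrt A + Real.sqrt (FQ t ξ) :=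
    (tri_of_form ht).2 x ξ
  set a : ℝ := Real.sqrt A
  set uu : ℝ := Real.sqrt (FQ t ξ)
  have ha2 : a ^ 2 = A := Real.sq_sqrt hA
  have ha0' : 0 ≤ a := Real.sqrt_nonneg _
  have hu0 : 0 ≤ uu := Real.sqrt_nonneg _
  have haK : a ≤ Real.sqrt K := Real.sqrt_le_sqrt (by rw [hKdef]; linarith)
  have huK : uu ≤ Real.sqrt K / Real.sqrt n := by
    calc uu ≤ Real.sqrt (K / n) := Real.sqrt_le_sqrt ht1
      _ = Real.sqrt K / Real.sqrt n := Real.sqrt_div (le_of_lt hK) n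
  have hKK : Real.sqrt K ^ 2 = K := Real.sq_sqrt (le_of_lt hK)
  have htx : FQ t (x + ξ) ≤ (a + uu) ^ 2 := by
    have := pow_le_pow_left₀ (Real.sqrt_nonneg _) htri 2
    rwa [Real.sq_sqrt (FQ_nn ht _)] at this
  have hbound : FQ s (x - z) + FQ t z ≤ A / 2 + ε := by
    have hs1 : FQ s (x - z) ≤ 4⁻¹ * K := by
      calc FQ s (x - z) ≤ FQ w (x - z) := hsw _
        _ = 4⁻¹ * FQ w (x - ξ) := e1
        _ ≤ 4⁻¹ * K := by linarith
    have ht2 : FQ t z ≤ 4⁻¹ * (a + uu) ^ 2 := by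
      rw [e2]; linarith
    -- numeric bounds on (a+uu)^2
    have hcross : a * uu ≤ K / Real.sqrt n := by
      calc a * uu ≤ Real.sqrt K * (Real.sqrt K / Real.sqrt n) :=
            mul_le_mul haK huK hu0 (Real.sqrt_nonneg _)
        _ = K / Real.sqrt n := by
            rw [mul_div_assoc', Real.mul_self_sqrt (le_of_lt hK)]
    have hu2 : uu ^ 2 ≤ K / Real.sqrt n := by
      have h1 : uu ^ 2 ≤ (Real.sqrt K / Real.sqrt n) ^ 2 :=
        pow_le_pow_left₀ hu0 huK 2
      have h2 : (Real.sqrt K / Real.sqrt n) ^ 2 = K / (n:ℝ) := by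
        rw [div_pow, hKK, Real.sq_sqrt (le_of_lt hn0)]
      have h3 : K / (n:ℝ) ≤ K / Real.sqrt n :=
        div_le_div_of_nonneg_left (le_of_lt hK) hsn hsn_le_n
      calc uu ^ 2 ≤ K / (n:ℝ) := by rw [← h2]; exact h1
        _ ≤ _ := h3
    have hfin : (a + uu) ^ 2 ≤ A + 3 * ε := by
      nlinarith [hcross, hu2, hKdivsn]
    calc FQ s (x - z) + FQ t z ≤ 4⁻¹ * K + 4⁻¹ * (A + 3 * ε) := by linarith
      _ = A / 2 + ε := by rw [hKdef]; ring
  calc (⨅ y : X, (FQ s (x - y) + FQ t y)) ≤ FQ s (x - z) + FQ t z :=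
        ciInf_le (bddBelow_of_nonneg fun y => add_nonneg (FQ_nn hs _) (FQ_nn ht _)) z
    _ ≤ A / 2 + ε := hbound
    _ = FQ t x / 2 + ε := by rw [hAdef]

end Forms
lemma inf_swap' {a b : X → ℝ} (ha0 : ∀ x, 0 ≤ a x) (hb0 : ∀ x, 0 ≤ b x) (x : X) :
    (⨅ y : X, (a (x - y) + b y)) = ⨅ y : X, (b (x - y) + a y) := by
  have hbdd1 : BddBelow (Set.range fun y => a (x - y) + b y) :=
    bddBelow_of_nonneg fun y => add_nonneg (ha0 _) (hb0 _)
  have hbdd2 : BddBelow (Set.range fun y => b (x - y) + a y) :=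
    bddBelow_of_nonneg fun y => add_nonneg (hb0 _) (ha0 _)
  apply le_antisymm
  · apply le_ciInf
    intro y
    have := ciInf_le hbdd1 (x - y)
    calc (⨅ z : X, (a (x - z) + b z)) ≤ a (x - (x - y)) + b (x - y) := this
      _ = b (x - y) + a y := by rw [sub_sub_cancel]; ring
  · apply le_ciInf
    intro y
    have := ciInf_le hbdd2 (x - y)
    calc (⨅ z : X, (b (x - z) + a z)) ≤ b (x - (x - y)) + a (x - y) := this
      _ = a (x - y) + b y := by rw [sub_sub_cancel]; ring

lemma parInf_mono_right {a b b' : X → ℝ} (ha0 : ∀ x, 0 ≤ a x) (hb0 : ∀ x, 0 ≤ b x)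
    (hbb' : ∀ y, b y ≤ b' y) (x : X) :
    (⨅ y : X, (a (x - y) + b y)) ≤ ⨅ y : X, (a (x - y) + b' y) := by
  apply le_ciInf
  intro y
  exact (ciInf_le (bddBelow_of_nonneg fun y => add_nonneg (ha0 _) (hb0 _)) y).trans
    (add_le_add_right (hbb' y) _)

lemma parInf_mono_left {a a' b : X → ℝ} (ha0 : ∀ x, 0 ≤ a x) (hb0 : ∀ x, 0 ≤ b x)
    (haa' : ∀ y, a y ≤ a' y) (x : X) :
    (⨅ y : X, (a (x - y) + b y)) ≤ ⨅ y : X, (a' (x - y) + b y) := by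
  apply le_ciInf
  intro y
  exact (ciInf_le (bddBelow_of_nonneg fun y => add_nonneg (ha0 _) (hb0 _)) y).trans
    (add_le_add_left (haa' (x - y)) _)

lemma parInf_le_base {a b : X → ℝ} (ha0 : ∀ x, 0 ≤ a x) (hb0 : ∀ x, 0 ≤ b x)
    (hb00 : b 0 = 0) (x : X) :
    (⨅ y : X, (a (x - y) + b y)) ≤ a x := by
  have h := ciInf_le (f := fun y => a (x - y) + b y)
    (bddBelow_of_nonneg fun y => add_nonneg (ha0 (x - y)) (hb0 y)) (0 : X)
  simpa [hb00] using h

/-- Main suprema identity: if `f ≤ a`, `f ≤ b`, `√f` is a seminorm, and each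
`(a : n b) ≤ f`, then `f = D_b a`. -/
lemma Dsup_eq {f a b : X → ℝ} (hf : TriFn f)
    (hfa : ∀ x, f x ≤ a x) (hfb : ∀ x, f x ≤ b x)
    (hub : ∀ (n : ℕ) (x : X), (⨅ y : X, (a (x - y) + (n : ℝ) * b y)) ≤ f x)
    (x : X) :
    f x = ⨆ n : ℕ, ⨅ y : X, (a (x - y) + (n : ℝ) * b y) := by
  apply le_antisymm
  · apply le_of_forall_pos_le_add
    intro ε hε
    obtain ⟨n₀, hn₀⟩ := exists_nat_ge (f x / ε)
    have hn1 : 1 ≤ n₀ + 1 := by omega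
    have hlow := lemE2 hf hfa hfb (n₀ + 1) hn1 x
    have hsup : (⨅ y : X, (a (x - y) + ((n₀ + 1 : ℕ) : ℝ) * b y))
        ≤ ⨆ n : ℕ, ⨅ y : X, (a (x - y) + (n : ℝ) * b y) :=
      le_ciSup ⟨f x, by rintro _ ⟨k, rfl⟩; exact hub k x⟩ (n₀ + 1)
    have hpos : (0:ℝ) < ((n₀ + 1 : ℕ) : ℝ) := by positivity
    have hdiv : f x / ((n₀ + 1 : ℕ) : ℝ) ≤ ε := by
      rw [div_le_iff₀ hpos]
      have h1 : f x ≤ ε * n₀ := by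
        have := (div_le_iff₀ hε).mp hn₀
        linarith
      have h2 : (n₀ : ℝ) ≤ ((n₀ + 1 : ℕ) : ℝ) := by push_cast; linarith
      nlinarith
    linarith
  · exact ciSup_le fun n => hub n x
end AuxMeet

theorem meet_of_quasi_units
    {X : Type*} [AddCommGroup X] [Module ℂ X]
    (w s t m : X →ₗ[ℂ] X →ₗ⋆[ℂ] ℂ)
    (hw : IsNNForm w) (hs : IsNNForm s) (ht : IsNNForm t) (hm : IsNNForm m)
    (hsq : ∀ x : X, FQ s x = ⨆ n : ℕ, ⨅ y : X, (FQ w (x - y) + (n : ℝ) * FQ s y))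
    (htq : ∀ x : X, FQ t x = ⨆ n : ℕ, ⨅ y : X, (FQ w (x - y) + (n : ℝ) * FQ t y))
    (hmd : ∀ x : X, FQ m x = 2 * ⨅ y : X, (FQ s (x - y) + FQ t y)) :
    (FLe m s ∧ FLe m t ∧
      ∀ r : X →ₗ[ℂ] X →ₗ⋆[ℂ] ℂ, IsNNForm r → FLe r s → FLe r t → FLe r m) ∧
    (∀ x : X, FQ m x = ⨆ n : ℕ, ⨅ y : X, (FQ w (x - y) + (n : ℝ) * FQ m y)) ∧
    (∀ x : X, FQ m x = ⨆ n : ℕ, ⨅ y : X, (FQ t (x - y) + (n : ℝ) * FQ s y)) ∧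
    (∀ x : X, FQ m x = ⨆ n : ℕ, ⨅ y : X, (FQ s (x - y) + (n : ℝ) * FQ t y)) := by
  obtain ⟨hsb, hsw⟩ := qu_bounds hw hs hsq
  obtain ⟨htb, htw⟩ := qu_bounds hw ht htq
  have hmt : FLe m t := by
    intro x
    have h := parallel_le_half hw hs ht hsw htb x
    rw [hmd x]; linarith
  have hms : FLe m s := by
    intro x
    have hswap := inf_swap' (FQ_nn hs) (FQ_nn ht) x
    have h := parallel_le_half hw ht hs htw hsb x
    rw [hmd x, hswap]; linarith
  have hGLB : ∀ r : X →ₗ[ℂ] X →ₗ⋆[ℂ] ℂ,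
      IsNNForm r → FLe r s → FLe r t → FLe r m := by
    intro r hr hrs hrt x
    rw [hmd x]
    exact lemE1 (tri_of_form hr) (FQ_nn hs) (FQ_nn ht) hrs hrt x
  have hmw : ∀ x : X, FQ m x ≤ FQ w x := fun x => (hms x).trans (hsw x)
  refine ⟨⟨hms, hmt, hGLB⟩, ?_, ?_, ?_⟩
  · -- m is a w-quasi-unit
    have hub : ∀ (n : ℕ) (x : X),
        (⨅ y : X, (FQ w (x - y) + (n : ℝ) * FQ m y)) ≤ FQ m x := by
      intro n x
      have hb0 : ∀ y : X, (0:ℝ) ≤ (n : ℝ) * FQ m y :=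
        fun y => mul_nonneg (Nat.cast_nonneg n) (FQ_nn hm y)
      have htriC : TriFn (fun x : X => ⨅ y : X, (FQ w (x - y) + (n : ℝ) * FQ m y)) :=
        lemC (tri_of_form hw) ((tri_of_form hm).const_mul (Nat.cast_nonneg n))
      have hgs : ∀ x : X,
          (⨅ y : X, (FQ w (x - y) + (n : ℝ) * FQ m y)) ≤ FQ s x := fun x =>
        (parInf_mono_right (FQ_nn hw) hb0
          (fun y => mul_le_mul_of_nonneg_left (hms y) (Nat.cast_nonneg n)) x).trans
          (hsb n x)
      have hgt : ∀ x : X,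
          (⨅ y : X, (FQ w (x - y) + (n : ℝ) * FQ m y)) ≤ FQ t x := fun x =>
        (parInf_mono_right (FQ_nn hw) hb0
          (fun y => mul_le_mul_of_nonneg_left (hmt y) (Nat.cast_nonneg n)) x).trans
          (htb n x)
      have h := lemE1 htriC (FQ_nn hs) (FQ_nn ht) hgs hgt x
      rwa [← hmd x] at h
    exact Dsup_eq (tri_of_form hm) hmw (fun x => le_rfl) hub
  · -- m = D_s t
    have hub : ∀ (n : ℕ) (x : X),
        (⨅ y : X, (FQ t (x - y) + (n : ℝ) * FQ s y)) ≤ FQ m x := by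
      intro n x
      have hb0 : ∀ y : X, (0:ℝ) ≤ (n : ℝ) * FQ s y :=
        fun y => mul_nonneg (Nat.cast_nonneg n) (FQ_nn hs y)
      have htriC : TriFn (fun x : X => ⨅ y : X, (FQ t (x - y) + (n : ℝ) * FQ s y)) :=
        lemC (tri_of_form ht) ((tri_of_form hs).const_mul (Nat.cast_nonneg n))
      have hgs : ∀ x : X,
          (⨅ y : X, (FQ t (x - y) + (n : ℝ) * FQ s y)) ≤ FQ s x := fun x =>
        (parInf_mono_left (FQ_nn ht) hb0 htw x).trans (hsb n x)
      have hgt : ∀ x : X,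
          (⨅ y : X, (FQ t (x - y) + (n : ℝ) * FQ s y)) ≤ FQ t x := fun x =>
        parInf_le_base (FQ_nn ht) hb0 (by simp [FQ_zero]) x
      have h := lemE1 htriC (FQ_nn hs) (FQ_nn ht) hgs hgt x
      rwa [← hmd x] at h
    exact Dsup_eq (tri_of_form hm) hmt hms hub
  · -- m = D_t s
    have hub : ∀ (n : ℕ) (x : X),
        (⨅ y : X, (FQ s (x - y) + (n : ℝ) * FQ t y)) ≤ FQ m x := by
      intro n x
      have hb0 : ∀ y : X, (0:ℝ) ≤ (n : ℝ) * FQ t y :=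
        fun y => mul_nonneg (Nat.cast_nonneg n) (FQ_nn ht y)
      have htriC : TriFn (fun x : X => ⨅ y : X, (FQ s (x - y) + (n : ℝ) * FQ t y)) :=
        lemC (tri_of_form hs) ((tri_of_form ht).const_mul (Nat.cast_nonneg n))
      have hgt : ∀ x : X,
          (⨅ y : X, (FQ s (x - y) + (n : ℝ) * FQ t y)) ≤ FQ t x := fun x =>
        (parInf_mono_left (FQ_nn hs) hb0 hsw x).trans (htb n x)
      have hgs : ∀ x : X,
          (⨅ y : X, (FQ s (x - y) + (n : ℝ) * FQ t y)) ≤ FQ s x := fun x =>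
        parInf_le_base (FQ_nn hs) hb0 (by simp [FQ_zero]) x
      have h := lemE1 htriC (FQ_nn hs) (FQ_nn ht) hgs hgt x
      rwa [← hmd x] at h
    exact Dsup_eq (tri_of_form hm) hms hmt hub
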